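/- Let d, n be positive integers and let δ⁺ denote the minimum out-degree of the directed binomial random graph on [n] with arc probability q, where each vertex's out-degree is Binomial(n−1, q). If q ∼ c·log n/n with c > 1 constant, then a.a.s. δ⁺ ≥ (1+o(1))·f₁(c)·c·log n, where f₁(c) = −((c−1)/c)/W(−(c−1)/(ce)) and W is the lower branch of the Lambert W function. Moreover f₁ is strictly increasing on [1,∞), f₁(1) = 0, and f₁(c) → 1 as c → ∞. -/

import Mathlib

open Finset Filter

lemma aux_total {ι : Type*} [DecidableEq ι] (A : Finset ι) (q : ℝ) :
    ∑ D ∈ A.powerset, q ^ D.card * (1 - q) ^ (A.card - D.card) = 1 := by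
  calc ∑ D ∈ A.powerset, q ^ D.card * (1 - q) ^ (A.card - D.card)
      = ∑ D ∈ A.powerset, (∏ _i ∈ D, q) * ∏ _i ∈ A \ D, (1 - q) := by
        refine Finset.sum_congr rfl fun D hD => ?_
        rw [Finset.prod_const, Finset.prod_const,
          Finset.card_sdiff_of_subset (Finset.mem_powerset.mp hD)]
    _ = ∏ _i ∈ A, (q + (1 - q)) := (Finset.prod_add _ _ _).symm
    _ = 1 := by simp

lemma aux_chernoff {ι : Type*} [DecidableEq ι] (A : Finset ι) (p : ι → Prop) [DecidablePred p]
    (q lam T : ℝ) (hq0 : 0 ≤ q) (hq1 : q ≤ 1) (hlam : 0 ≤ lam) :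
    ∑ D ∈ A.powerset.filter fun D => ((D.filter p).card : ℝ) < T,
        q ^ D.card * (1 - q) ^ (A.card - D.card)
      ≤ Real.exp (lam * T) * (q * Real.exp (-lam) + (1 - q)) ^ (A.filter p).card := by
  have hq1' : (0:ℝ) ≤ 1 - q := by linarith
  have key : ∑ D ∈ A.powerset, (Real.exp (-lam)) ^ (D.filter p).card *
      (q ^ D.card * (1 - q) ^ (A.card - D.card))
      = (q * Real.exp (-lam) + (1 - q)) ^ (A.filter p).card := by
    have h1 : ∀ D ∈ A.powerset, (Real.exp (-lam)) ^ (D.filter p).card *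
        (q ^ D.card * (1 - q) ^ (A.card - D.card))
        = (∏ i ∈ D, if p i then q * Real.exp (-lam) else q) * ∏ _i ∈ A \ D, (1 - q) := by
      intro D hD
      rw [Finset.prod_ite, Finset.prod_const, Finset.prod_const, Finset.prod_const,
        Finset.card_sdiff_of_subset (Finset.mem_powerset.mp hD), mul_pow,
        ← Finset.card_filter_add_card_filter_not (s := D) (p := p), pow_add]
      ring
    rw [Finset.sum_congr rfl h1, ← Finset.prod_add]
    have h2 : ∀ i ∈ A, ((if p i then q * Real.exp (-lam) else q) + (1 - q))
        = if p i then q * Real.exp (-lam) + (1 - q) else 1 := by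
      intro i _
      split <;> ring
    rw [Finset.prod_congr rfl h2, Finset.prod_ite, Finset.prod_const, Finset.prod_const,
      one_pow, mul_one]
  have hw : ∀ D : Finset ι, 0 ≤ q ^ D.card * (1 - q) ^ (A.card - D.card) := fun D =>
    mul_nonneg (pow_nonneg hq0 _) (pow_nonneg hq1' _)
  calc ∑ D ∈ A.powerset.filter fun D => ((D.filter p).card : ℝ) < T,
        q ^ D.card * (1 - q) ^ (A.card - D.card)
      ≤ ∑ D ∈ A.powerset.filter fun D => ((D.filter p).card : ℝ) < T,
        Real.exp (lam * T) * ((Real.exp (-lam)) ^ (D.filter p).card *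
          (q ^ D.card * (1 - q) ^ (A.card - D.card))) := by
        refine Finset.sum_le_sum fun D hD => ?_
        have hcnt : ((D.filter p).card : ℝ) < T := (Finset.mem_filter.mp hD).2
        have h1 : (1:ℝ) ≤ Real.exp (lam * T) * (Real.exp (-lam)) ^ (D.filter p).card := by
          rw [← Real.exp_nat_mul, ← Real.exp_add]
          refine Real.one_le_exp ?_
          have h3 : ((D.filter p).card : ℝ) * (-lam) = -(lam * (D.filter p).card) := by ring
          rw [h3]
          nlinarith
        calc q ^ D.card * (1 - q) ^ (A.card - D.card)
            = 1 * (q ^ D.card * (1 - q) ^ (A.card - D.card)) := (one_mul _).symm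
          _ ≤ (Real.exp (lam * T) * (Real.exp (-lam)) ^ (D.filter p).card) *
              (q ^ D.card * (1 - q) ^ (A.card - D.card)) :=
              mul_le_mul_of_nonneg_right h1 (hw D)
          _ = Real.exp (lam * T) * ((Real.exp (-lam)) ^ (D.filter p).card *
              (q ^ D.card * (1 - q) ^ (A.card - D.card))) := by ring
    _ ≤ ∑ D ∈ A.powerset,
        Real.exp (lam * T) * ((Real.exp (-lam)) ^ (D.filter p).card *
          (q ^ D.card * (1 - q) ^ (A.card - D.card))) := by
        refine Finset.sum_le_sum_of_subset_of_nonneg (Finset.filter_subset _ _) ?_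
        intro D _ _
        have := hw D
        positivity
    _ = Real.exp (lam * T) * (q * Real.exp (-lam) + (1 - q)) ^ (A.filter p).card := by
        rw [← Finset.mul_sum, key]

lemma aux_union {ι κ : Type*} [Fintype κ] (s : Finset ι) (w : ι → ℝ) (hw : ∀ i, 0 ≤ w i)
    (P : κ → ι → Prop) {d1 : DecidablePred fun i => ¬ ∀ v, P v i}
    {d2 : ∀ v, DecidablePred fun i => ¬ P v i} :
    ∑ i ∈ s.filter fun i => ¬ ∀ v, P v i, w i
      ≤ ∑ v : κ, ∑ i ∈ s.filter fun i => ¬ P v i, w i := by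
  calc ∑ i ∈ s.filter fun i => ¬ ∀ v, P v i, w i
      ≤ ∑ i ∈ s.filter fun i => ¬ ∀ v, P v i, ∑ v : κ, if ¬ P v i then w i else 0 := by
        refine Finset.sum_le_sum fun i hi => ?_
        obtain ⟨v, hv⟩ := not_forall.mp (Finset.mem_filter.mp hi).2
        have h1 := Finset.single_le_sum (f := fun v => if ¬ P v i then w i else 0)
          (fun v _ => by split
                         · exact hw i
                         · exact le_refl 0) (Finset.mem_univ v)
        simpa [hv] using h1
    _ = ∑ v : κ, ∑ i ∈ (s.filter fun i => ¬ ∀ v, P v i), if ¬ P v i then w i else 0 :=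
        Finset.sum_comm
    _ ≤ ∑ v : κ, ∑ i ∈ s.filter fun i => ¬ P v i, w i := by
        refine Finset.sum_le_sum fun v _ => ?_
        rw [Finset.sum_ite, Finset.sum_const_zero, add_zero, Finset.filter_filter]
        refine Finset.sum_le_sum_of_subset_of_nonneg ?_ (fun i _ _ => hw i)
        intro i hi
        rw [Finset.mem_filter] at hi ⊢
        exact ⟨hi.1, hi.2.2⟩

lemma aux_card (n : ℕ) (v : Fin n) :
    ((Finset.univ.filter fun a : Fin n × Fin n => a.1 ≠ a.2).filter
      fun a => a.1 = v).card = n - 1 := by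
  rw [Finset.filter_filter]
  have h : (Finset.univ.filter fun a : Fin n × Fin n => a.1 ≠ a.2 ∧ a.1 = v)
      = ({v} : Finset (Fin n)) ×ˢ (Finset.univ.erase v) := by
    ext a
    simp only [Finset.mem_filter, Finset.mem_univ, true_and, Finset.mem_product,
      Finset.mem_singleton, Finset.mem_erase, and_true]
    constructor
    · rintro ⟨h1, h2⟩
      subst h2
      exact ⟨rfl, fun hh => h1 hh.symm⟩
    · rintro ⟨h1, h2⟩
      subst h1
      exact ⟨fun hh => h2 hh.symm, rfl⟩
  rw [h, Finset.card_product, Finset.card_singleton, one_mul,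
    Finset.card_erase_of_mem (Finset.mem_univ v), Finset.card_univ, Fintype.card_fin]

open Classical in
lemma aux_bad_le (n : ℕ) (qn lam T : ℝ) (hq0 : 0 ≤ qn) (hq1 : qn ≤ 1) (hlam : 0 ≤ lam) :
    ∑ D ∈ ((Finset.univ.filter fun a : Fin n × Fin n => a.1 ≠ a.2).powerset.filter
        fun D => ¬ ∀ v : Fin n,
          T ≤ ((D.filter fun a : Fin n × Fin n => a.1 = v).card : ℝ)),
      qn ^ D.card *
        (1 - qn) ^ ((Finset.univ.filter fun a : Fin n × Fin n => a.1 ≠ a.2).card - D.card)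
      ≤ n * (Real.exp (lam * T) * (qn * Real.exp (-lam) + (1 - qn)) ^ (n - 1)) := by
  have hw : ∀ D : Finset (Fin n × Fin n), 0 ≤ qn ^ D.card *
      (1 - qn) ^ ((Finset.univ.filter fun a : Fin n × Fin n => a.1 ≠ a.2).card - D.card) :=
    fun D => mul_nonneg (pow_nonneg hq0 _) (pow_nonneg (by linarith) _)
  calc ∑ D ∈ ((Finset.univ.filter fun a : Fin n × Fin n => a.1 ≠ a.2).powerset.filter
        fun D => ¬ ∀ v : Fin n,
          T ≤ ((D.filter fun a : Fin n × Fin n => a.1 = v).card : ℝ)),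
      qn ^ D.card *
        (1 - qn) ^ ((Finset.univ.filter fun a : Fin n × Fin n => a.1 ≠ a.2).card - D.card)
      ≤ ∑ v : Fin n, ∑ D ∈ ((Finset.univ.filter fun a : Fin n × Fin n => a.1 ≠ a.2).powerset.filter
          fun D => ¬ T ≤ ((D.filter fun a : Fin n × Fin n => a.1 = v).card : ℝ)),
        qn ^ D.card *
          (1 - qn) ^ ((Finset.univ.filter fun a : Fin n × Fin n => a.1 ≠ a.2).card - D.card) :=
      aux_union _ _ hw _
    _ ≤ ∑ _v : Fin n, Real.exp (lam * T) * (qn * Real.exp (-lam) + (1 - qn)) ^ (n - 1) := by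
        refine Finset.sum_le_sum fun v _ => ?_
        have heq : ((Finset.univ.filter fun a : Fin n × Fin n => a.1 ≠ a.2).powerset.filter
            fun D => ¬ T ≤ ((D.filter fun a : Fin n × Fin n => a.1 = v).card : ℝ))
            = ((Finset.univ.filter fun a : Fin n × Fin n => a.1 ≠ a.2).powerset.filter
            fun D => ((D.filter fun a : Fin n × Fin n => a.1 = v).card : ℝ) < T) := by
          apply Finset.filter_congr
          intro D _
          simp [not_le]
        rw [heq]
        have := aux_chernoff (Finset.univ.filter fun a : Fin n × Fin n => a.1 ≠ a.2)
          (fun a : Fin n × Fin n => a.1 = v) qn lam T hq0 hq1 hlam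
        rwa [aux_card n v] at this
    _ = n * (Real.exp (lam * T) * (qn * Real.exp (-lam) + (1 - qn)) ^ (n - 1)) := by
        rw [Finset.sum_const, Finset.card_univ, Fintype.card_fin, nsmul_eq_mul]

lemma aux_w (W : ℝ → ℝ)
    (hW : ∀ x ∈ Set.Ico (-(Real.exp 1)⁻¹) (0 : ℝ),
      W x * Real.exp (W x) = x ∧ W x ≤ -1)
    (f₁ : ℝ → ℝ)
    (hf₁ : ∀ c : ℝ, f₁ c = -((c - 1) / c) / W (-((c - 1) / (c * Real.exp 1))))
    (c : ℝ) (hc : 1 < c) :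
    W (-((c - 1) / (c * Real.exp 1))) < -1 ∧
    f₁ c = Real.exp (W (-((c - 1) / (c * Real.exp 1))) + 1) ∧
    c * W (-((c - 1) / (c * Real.exp 1))) *
      Real.exp (W (-((c - 1) / (c * Real.exp 1))) + 1) = -(c - 1) := by
  have he : (0:ℝ) < Real.exp 1 := Real.exp_pos 1
  have hc0 : (0:ℝ) < c := by linarith
  set t : ℝ := -((c - 1) / (c * Real.exp 1)) with ht
  have htmem : t ∈ Set.Ico (-(Real.exp 1)⁻¹) (0:ℝ) := by
    constructor
    · have h1 : (c - 1) / (c * Real.exp 1) ≤ (Real.exp 1)⁻¹ := by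
        rw [div_le_iff₀ (by positivity)]
        have h2 : (Real.exp 1)⁻¹ * (c * Real.exp 1) = c := by field_simp
        rw [h2]; linarith
      simpa [ht] using neg_le_neg h1
    · have h1 : (0:ℝ) < (c - 1) / (c * Real.exp 1) := div_pos (by linarith) (by positivity)
      simpa [ht] using h1
  obtain ⟨hWt, hWle⟩ := hW t htmem
  set w := W t with hwdef
  have hkey : c * w * Real.exp (w + 1) = -(c - 1) := by
    rw [Real.exp_add]
    have h2 : c * w * (Real.exp w * Real.exp 1) = (w * Real.exp w) * (c * Real.exp 1) := by
      ring
    rw [h2, hWt, ht]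
    field_simp
  have hwlt : w < -1 := by
    rcases lt_or_eq_of_le hWle with h | h
    · exact h
    · exfalso
      rw [h] at hkey
      have h3 : Real.exp (-1 + 1) = 1 := by norm_num
      rw [h3] at hkey
      nlinarith
  refine ⟨hwlt, ?_, hkey⟩
  rw [hf₁ c, ← ht, ← hwdef]
  have hw0 : w ≠ 0 := by linarith
  rw [div_eq_iff hw0]
  have hc0' : c ≠ 0 := ne_of_gt hc0
  field_simp
  linarith [hkey]

lemma aux_phi_anti : StrictAntiOn (fun w : ℝ => w * Real.exp w) (Set.Iic (-1)) := by
  refine strictAntiOn_of_deriv_neg (convex_Iic _)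
    (Continuous.continuousOn (by continuity)) ?_
  intro x hx
  rw [interior_Iic] at hx
  have hd : HasDerivAt (fun w : ℝ => w * Real.exp w) (1 * Real.exp x + x * Real.exp x) x :=
    (hasDerivAt_id x).mul (Real.hasDerivAt_exp x)
  rw [hd.deriv]
  have hx' : x < -1 := hx
  nlinarith [Real.exp_pos x]

lemma aux_psi_anti : StrictAntiOn (fun s : ℝ => (1 + s) * Real.exp (-s)) (Set.Ici 0) := by
  refine strictAntiOn_of_deriv_neg (convex_Ici _)
    (Continuous.continuousOn (by continuity)) ?_
  intro x hx
  rw [interior_Ici] at hx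
  have hneg : HasDerivAt (fun s : ℝ => -s) (-1) x := (hasDerivAt_id x).neg
  have hexp : HasDerivAt (fun s : ℝ => Real.exp (-s)) (Real.exp (-x) * (-1)) x :=
    (Real.hasDerivAt_exp (-x)).comp x hneg
  have hd : HasDerivAt (fun s : ℝ => (1 + s) * Real.exp (-s))
      (1 * Real.exp (-x) + (1 + x) * (Real.exp (-x) * (-1))) x :=
    ((hasDerivAt_id x).const_add 1).mul hexp
  rw [hd.deriv]
  have hx' : (0:ℝ) < x := hx
  nlinarith [Real.exp_pos (-x)]

set_option maxHeartbeats 1000000 in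
open Classical in
/-- In the directed binomial random graph on `[n]` with arc probability
`q ∼ c·log n/n`, `c > 1`, a.a.s. the minimum out-degree is at least
`(1+o(1))·f₁(c)·c·log n`, where `f₁(c) = -((c-1)/c)/W(-(c-1)/(ce))` and `W` is the
lower branch of the Lambert `W` function; moreover `f₁` is strictly increasing on
`[1,∞)`, `f₁(1) = 0` and `f₁(c) → 1` as `c → ∞`. -/
theorem min_outdegree_directed_gnp
    (W : ℝ → ℝ)
    (hW : ∀ x ∈ Set.Ico (-(Real.exp 1)⁻¹) (0 : ℝ),
      W x * Real.exp (W x) = x ∧ W x ≤ -1)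
    (f₁ : ℝ → ℝ)
    (hf₁ : ∀ c : ℝ, f₁ c = -((c - 1) / c) / W (-((c - 1) / (c * Real.exp 1))))
    (c : ℝ) (hc : 1 < c)
    (q : ℕ → ℝ) (hq01 : ∀ n, 0 ≤ q n ∧ q n ≤ 1)
    (hq : Tendsto (fun n : ℕ => q n / (c * Real.log n / n)) atTop (nhds 1)) :
    (∃ h : ℕ → ℝ, Tendsto h atTop (nhds 0) ∧
      Tendsto (fun n : ℕ =>
        ∑ D ∈ ((Finset.univ.filter fun a : Fin n × Fin n => a.1 ≠ a.2).powerset.filter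
            fun D => ∀ v : Fin n,
              (1 + h n) * f₁ c * c * Real.log n ≤
                ((D.filter fun a : Fin n × Fin n => a.1 = v).card : ℝ)),
          q n ^ D.card *
            (1 - q n) ^ ((Finset.univ.filter fun a : Fin n × Fin n => a.1 ≠ a.2).card
              - D.card)) atTop (nhds 1)) ∧
    StrictMonoOn f₁ (Set.Ici 1) ∧ f₁ 1 = 0 ∧ Tendsto f₁ atTop (nhds 1) := by
  obtain ⟨hwlt, hf₁c, hkey⟩ := aux_w W hW f₁ hf₁ c hc
  set w := W (-((c - 1) / (c * Real.exp 1))) with hwdef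
  set E : ℝ := Real.exp (w + 1) with hE
  have hEpos : 0 < E := Real.exp_pos _
  have hElt1 : E < 1 := by
    calc E = Real.exp (w + 1) := hE
      _ < Real.exp 0 := Real.exp_lt_exp.mpr (by linarith)
      _ = 1 := Real.exp_zero
  set lam : ℝ := -(1 + w) with hlam
  have hlampos : 0 < lam := by rw [hlam]; linarith
  have hexplam : Real.exp (-lam) = E := by rw [hE, hlam]; ring_nf
  set a : ℝ := c * E with ha
  have hapos : 0 < a := mul_pos (by linarith) hEpos
  set B : ℝ := lam * a with hB
  have hBpos : 0 < B := mul_pos hlampos hapos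
  have hid : 1 + lam * a + c * (E - 1) = 0 := by
    rw [hlam, ha, hE]
    linear_combination -hkey
  set εf : ℕ → ℝ := fun n => ((n - 1 : ℕ) : ℝ) * q n / Real.log n - c with hεfdef
  have hn1 : Tendsto (fun n : ℕ => ((n - 1 : ℕ) : ℝ) / n) atTop (nhds 1) := by
    have h1 : Tendsto (fun n : ℕ => 1 - 1 / (n:ℝ)) atTop (nhds 1) := by
      simpa using (tendsto_const_nhds (x := (1:ℝ))).sub (tendsto_one_div_atTop_nhds_zero_nat)
    refine Tendsto.congr' ?_ h1
    filter_upwards [eventually_ge_atTop 1] with n hn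
    have hn0 : (0:ℝ) < n := by exact_mod_cast hn
    rw [Nat.cast_sub hn, Nat.cast_one, sub_div, div_self (ne_of_gt hn0)]
  have hεf0 : Tendsto εf atTop (nhds 0) := by
    have h2 : Tendsto (fun n : ℕ => (q n / (c * Real.log n / n)) * (c * (((n - 1 : ℕ) : ℝ) / n)))
        atTop (nhds c) := by
      have h3 := hq.mul ((tendsto_const_nhds (x := c)).mul hn1)
      simpa using h3
    have h4 : Tendsto (fun n : ℕ => εf n + c) atTop (nhds c) := by
      refine Tendsto.congr' ?_ h2
      filter_upwards [eventually_ge_atTop 3] with n hn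
      have hn0 : (0:ℝ) < n := by
        have : (3:ℝ) ≤ n := by exact_mod_cast hn
        linarith
      have hL : (0:ℝ) < Real.log n := Real.log_pos (by
        have : (3:ℝ) ≤ n := by exact_mod_cast hn
        linarith)
      simp only [hεfdef]
      field_simp
      ring
    have h5 := h4.sub (tendsto_const_nhds (x := c))
    simpa using h5
  set h : ℕ → ℝ := fun n => -((|εf n| + 1 / Real.sqrt (Real.log n)) / B) with hhdef
  have hsqrt : Tendsto Real.sqrt atTop atTop := by
    refine tendsto_atTop_atTop.mpr fun b => ⟨b ^ 2, fun x hx => ?_⟩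
    calc b ≤ |b| := le_abs_self b
      _ = Real.sqrt (b ^ 2) := (Real.sqrt_sq_eq_abs b).symm
      _ ≤ Real.sqrt x := Real.sqrt_le_sqrt hx
  have hsqrtlog : Tendsto (fun n : ℕ => Real.sqrt (Real.log n)) atTop atTop :=
    hsqrt.comp ((Real.tendsto_log_atTop).comp tendsto_natCast_atTop_atTop)
  have hinv : Tendsto (fun n : ℕ => 1 / Real.sqrt (Real.log n)) atTop (nhds 0) := by
    simp only [one_div]; exact hsqrtlog.inv_tendsto_atTop
  have hh0 : Tendsto h atTop (nhds 0) := by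
    have h6 := ((hεf0.abs.add hinv).div_const B).neg
    simpa [hhdef] using h6
  refine ⟨⟨h, hh0, ?_⟩, ?_, ?_, ?_⟩
  · -- the probabilistic statement
    have hq0 : ∀ n, 0 ≤ q n := fun n => (hq01 n).1
    have hq1 : ∀ n, q n ≤ 1 := fun n => (hq01 n).2
    have hbadtend : Tendsto (fun n : ℕ =>
        ∑ D ∈ ((Finset.univ.filter fun a : Fin n × Fin n => a.1 ≠ a.2).powerset.filter
            fun D => ¬ ∀ v : Fin n,
              (1 + h n) * f₁ c * c * Real.log n ≤
                ((D.filter fun a : Fin n × Fin n => a.1 = v).card : ℝ)),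
          q n ^ D.card *
            (1 - q n) ^ ((Finset.univ.filter fun a : Fin n × Fin n => a.1 ≠ a.2).card
              - D.card)) atTop (nhds 0) := by
      have hexp0 : Tendsto (fun n : ℕ => Real.exp (-Real.sqrt (Real.log n))) atTop (nhds 0) :=
        Real.tendsto_exp_atBot.comp (tendsto_neg_atTop_atBot.comp hsqrtlog)
      refine squeeze_zero' ?_ ?_ hexp0
      · filter_upwards with n
        exact Finset.sum_nonneg fun D _ =>
          mul_nonneg (pow_nonneg (hq0 n) _) (pow_nonneg (by linarith [hq1 n]) _)
      · filter_upwards [eventually_ge_atTop 3] with n hn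
        have hn0 : (0:ℝ) < n := by
          have : (3:ℝ) ≤ n := by exact_mod_cast hn
          linarith
        have hL1 : 1 ≤ Real.log n := by
          rw [Real.le_log_iff_exp_le hn0]
          calc Real.exp 1 ≤ 2.7182818286 := Real.exp_one_lt_d9.le
            _ ≤ 3 := by norm_num
            _ ≤ n := by exact_mod_cast hn
        have hL0 : (0:ℝ) < Real.log n := by linarith
        have hs0 : 0 < Real.sqrt (Real.log n) := Real.sqrt_pos.mpr hL0
        have hbase0 : 0 ≤ q n * Real.exp (-lam) + (1 - q n) := by
          have h8 := Real.exp_pos (-lam)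
          nlinarith [hq0 n, hq1 n]
        have hbasele : q n * Real.exp (-lam) + (1 - q n)
            ≤ Real.exp (q n * (Real.exp (-lam) - 1)) := by
          have h8 := Real.add_one_le_exp (q n * (Real.exp (-lam) - 1))
          nlinarith
        have hpow : (q n * Real.exp (-lam) + (1 - q n)) ^ (n - 1)
            ≤ Real.exp (((n - 1 : ℕ) : ℝ) * (q n * (Real.exp (-lam) - 1))) := by
          calc (q n * Real.exp (-lam) + (1 - q n)) ^ (n - 1)
              ≤ (Real.exp (q n * (Real.exp (-lam) - 1))) ^ (n - 1) :=
                pow_le_pow_left₀ hbase0 hbasele _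
            _ = Real.exp (((n - 1 : ℕ) : ℝ) * (q n * (Real.exp (-lam) - 1))) :=
                (Real.exp_nat_mul _ _).symm
        have hMq : ((n - 1 : ℕ) : ℝ) * q n = (εf n + c) * Real.log n := by
          simp only [hεfdef]
          field_simp
          ring
        have hBh : B * h n = -(|εf n| + 1 / Real.sqrt (Real.log n)) := by
          simp only [hhdef]
          field_simp
        have hEabs : εf n * (E - 1) ≤ |εf n| := by
          calc εf n * (E - 1) ≤ |εf n * (E - 1)| := le_abs_self _
            _ = |εf n| * |E - 1| := abs_mul _ _
            _ ≤ |εf n| * 1 := by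
                refine mul_le_mul_of_nonneg_left ?_ (abs_nonneg _)
                rw [abs_le]
                constructor <;> linarith
            _ = |εf n| := mul_one _
        have hexpbound : Real.log n + (lam * ((1 + h n) * f₁ c * c * Real.log n)
            + ((n - 1 : ℕ) : ℝ) * (q n * (Real.exp (-lam) - 1)))
            ≤ -Real.sqrt (Real.log n) := by
          rw [hf₁c, hexplam]
          have hexp1 : Real.log n + (lam * ((1 + h n) * E * c * Real.log n)
              + ((n - 1 : ℕ) : ℝ) * (q n * (E - 1)))
              = Real.log n * (1 + lam * a + c * (E - 1))
                + Real.log n * (B * h n + εf n * (E - 1)) := by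
            have h9 : ((n - 1 : ℕ) : ℝ) * (q n * (E - 1))
                = (((n - 1 : ℕ) : ℝ) * q n) * (E - 1) := by ring
            rw [h9, hMq, hB, ha]
            ring
          rw [hexp1, hid]
          have h10 : B * h n + εf n * (E - 1) ≤ -(1 / Real.sqrt (Real.log n)) := by
            calc B * h n + εf n * (E - 1) ≤ B * h n + |εf n| := by linarith [hEabs]
              _ = -(|εf n| + 1 / Real.sqrt (Real.log n)) + |εf n| := by rw [hBh]
              _ = -(1 / Real.sqrt (Real.log n)) := by ring
          calc Real.log n * 0 + Real.log n * (B * h n + εf n * (E - 1))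
              ≤ Real.log n * 0 + Real.log n * (-(1 / Real.sqrt (Real.log n))) := by
                have := mul_le_mul_of_nonneg_left h10 hL0.le
                linarith
            _ = -(Real.log n / Real.sqrt (Real.log n)) := by ring
            _ = -Real.sqrt (Real.log n) := by rw [Real.div_sqrt]
        calc ∑ D ∈ ((Finset.univ.filter fun a : Fin n × Fin n => a.1 ≠ a.2).powerset.filter
              fun D => ¬ ∀ v : Fin n,
                (1 + h n) * f₁ c * c * Real.log n ≤
                  ((D.filter fun a : Fin n × Fin n => a.1 = v).card : ℝ)),
            q n ^ D.card *
              (1 - q n) ^ ((Finset.univ.filter fun a : Fin n × Fin n => a.1 ≠ a.2).card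
                - D.card)
            ≤ n * (Real.exp (lam * ((1 + h n) * f₁ c * c * Real.log n))
              * (q n * Real.exp (-lam) + (1 - q n)) ^ (n - 1)) :=
            aux_bad_le n (q n) lam _ (hq0 n) (hq1 n) hlampos.le
          _ ≤ n * (Real.exp (lam * ((1 + h n) * f₁ c * c * Real.log n))
              * Real.exp (((n - 1 : ℕ) : ℝ) * (q n * (Real.exp (-lam) - 1)))) := by
            refine mul_le_mul_of_nonneg_left ?_ hn0.le
            exact mul_le_mul_of_nonneg_left hpow (Real.exp_pos _).le
          _ = Real.exp (Real.log n + (lam * ((1 + h n) * f₁ c * c * Real.log n)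
              + ((n - 1 : ℕ) : ℝ) * (q n * (Real.exp (-lam) - 1)))) := by
            rw [Real.exp_add, Real.exp_add, Real.exp_log hn0]
          _ ≤ Real.exp (-Real.sqrt (Real.log n)) := Real.exp_le_exp.mpr hexpbound
    have hsplit : ∀ n : ℕ,
        (∑ D ∈ ((Finset.univ.filter fun a : Fin n × Fin n => a.1 ≠ a.2).powerset.filter
            fun D => ∀ v : Fin n,
              (1 + h n) * f₁ c * c * Real.log n ≤
                ((D.filter fun a : Fin n × Fin n => a.1 = v).card : ℝ)),
          q n ^ D.card *
            (1 - q n) ^ ((Finset.univ.filter fun a : Fin n × Fin n => a.1 ≠ a.2).card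
              - D.card))
        = 1 - (∑ D ∈ ((Finset.univ.filter fun a : Fin n × Fin n => a.1 ≠ a.2).powerset.filter
            fun D => ¬ ∀ v : Fin n,
              (1 + h n) * f₁ c * c * Real.log n ≤
                ((D.filter fun a : Fin n × Fin n => a.1 = v).card : ℝ)),
          q n ^ D.card *
            (1 - q n) ^ ((Finset.univ.filter fun a : Fin n × Fin n => a.1 ≠ a.2).card
              - D.card)) := by
      intro n
      have h7 := Finset.sum_filter_add_sum_filter_not
        ((Finset.univ.filter fun a : Fin n × Fin n => a.1 ≠ a.2).powerset)
        (fun D => ∀ v : Fin n,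
          (1 + h n) * f₁ c * c * Real.log n ≤
            ((D.filter fun a : Fin n × Fin n => a.1 = v).card : ℝ))
        (fun D => q n ^ D.card *
          (1 - q n) ^ ((Finset.univ.filter fun a : Fin n × Fin n => a.1 ≠ a.2).card - D.card))
      rw [aux_total] at h7
      linarith
    have h11 := (tendsto_const_nhds (x := (1:ℝ))).sub hbadtend
    rw [sub_zero] at h11
    exact h11.congr fun n => (hsplit n).symm
  · -- strict monotonicity
    intro c1 hc1 c2 hc2 h12
    simp only [Set.mem_Ici] at hc1 hc2
    rcases eq_or_lt_of_le hc1 with h1 | h1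
    · have hc2' : 1 < c2 := by rw [← h1] at h12; exact h12
      obtain ⟨hwlt2, hf2, hkey2⟩ := aux_w W hW f₁ hf₁ c2 hc2'
      have hz : f₁ c1 = 0 := by rw [← h1, hf₁ 1]; norm_num
      rw [hz, hf2]
      exact Real.exp_pos _
    · obtain ⟨hwlt1, hf1, hkey1⟩ := aux_w W hW f₁ hf₁ c1 h1
      obtain ⟨hwlt2, hf2, hkey2⟩ := aux_w W hW f₁ hf₁ c2 (by linarith)
      have he : (0:ℝ) < Real.exp 1 := Real.exp_pos 1
      have hc10 : (0:ℝ) < c1 := by linarith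
      have hc20 : (0:ℝ) < c2 := by linarith
      set w1 := W (-((c1 - 1) / (c1 * Real.exp 1))) with hw1def
      set w2 := W (-((c2 - 1) / (c2 * Real.exp 1))) with hw2def
      have ht1 : w1 * Real.exp w1 = -((c1 - 1) / (c1 * Real.exp 1)) := by
        rw [Real.exp_add] at hkey1
        field_simp
        linear_combination hkey1
      have ht2 : w2 * Real.exp w2 = -((c2 - 1) / (c2 * Real.exp 1)) := by
        rw [Real.exp_add] at hkey2
        field_simp
        linear_combination hkey2
      have hlt : (c1 - 1) / (c1 * Real.exp 1) < (c2 - 1) / (c2 * Real.exp 1) := by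
        rw [div_lt_div_iff₀ (by positivity) (by positivity)]
        nlinarith
      have hww : w1 < w2 := by
        rcases lt_trichotomy w1 w2 with h2 | h2 | h2
        · exact h2
        · exfalso
          rw [h2, ht2] at ht1
          linarith
        · exfalso
          have h3 := aux_phi_anti (Set.mem_Iic.mpr hwlt2.le) (Set.mem_Iic.mpr hwlt1.le) h2
          simp only at h3
          rw [ht1, ht2] at h3
          linarith
      rw [hf1, hf2]
      exact Real.exp_lt_exp.mpr (by linarith)
  · -- f₁ 1 = 0
    rw [hf₁ 1]
    norm_num
  · -- limit at infinity
    have hs0 : Tendsto (fun c' : ℝ => -(W (-((c' - 1) / (c' * Real.exp 1))) + 1))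
        atTop (nhds 0) := by
      rw [tendsto_order]
      constructor
      · intro b hb
        filter_upwards [eventually_gt_atTop 1] with c' hcc
        obtain ⟨hwlt', _, _⟩ := aux_w W hW f₁ hf₁ c' hcc
        linarith
      · intro b hb
        have hψb : (1 + b) * Real.exp (-b) < 1 := by
          have h3 := aux_psi_anti (Set.self_mem_Ici) (Set.mem_Ici.mpr hb.le) hb
          simpa using h3
        have hx : Tendsto (fun c' : ℝ => (c' - 1) / c') atTop (nhds 1) := by
          have h4 : Tendsto (fun c' : ℝ => 1 - c'⁻¹) atTop (nhds 1) := by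
            simpa using (tendsto_const_nhds (x := (1:ℝ))).sub tendsto_inv_atTop_zero
          refine Tendsto.congr' ?_ h4
          filter_upwards [eventually_ne_atTop (0:ℝ)] with c' hc0
          field_simp
        have hev2 := (tendsto_order.1 hx).1 _ hψb
        filter_upwards [eventually_gt_atTop 1, hev2] with c' hcc hgt
        obtain ⟨hwlt', hf', hkey'⟩ := aux_w W hW f₁ hf₁ c' hcc
        have hc'0 : (0:ℝ) < c' := by linarith
        set w' := W (-((c' - 1) / (c' * Real.exp 1))) with hw'def
        have hψs : (1 + -(w' + 1)) * Real.exp (-(-(w' + 1))) = (c' - 1) / c' := by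
          have h5 : (1 + -(w' + 1)) * Real.exp (-(-(w' + 1)))
              = -(w' * Real.exp (w' + 1)) := by
            have h6 : -(-(w' + 1)) = w' + 1 := by ring
            rw [h6]
            ring
          rw [h5]
          rw [eq_div_iff (ne_of_gt hc'0)]
          linear_combination -hkey'
        by_contra hnot
        push_neg at hnot
        rcases eq_or_lt_of_le hnot with h6 | h6
        · rw [h6] at hgt
          rw [hψs] at hgt
          exact lt_irrefl _ hgt
        · have h7 := aux_psi_anti (Set.mem_Ici.mpr hb.le)
            (Set.mem_Ici.mpr (by linarith : (0:ℝ) ≤ -(w' + 1))) h6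
          simp only at h7
          rw [hψs] at h7
          linarith
    have h8 : Tendsto (fun c' : ℝ => Real.exp (-(-(W (-((c' - 1) / (c' * Real.exp 1))) + 1))))
        atTop (nhds 1) := by
      have h9 := hs0.neg
      rw [neg_zero] at h9
      have h10 := (Real.continuous_exp.tendsto 0).comp h9
      simpa [Function.comp_def] using h10
    refine Tendsto.congr' ?_ h8
    filter_upwards [eventually_gt_atTop 1] with c' hcc
    obtain ⟨_, hf', _⟩ := aux_w W hW f₁ hf₁ c' hcc
    rw [hf']
    norm_num
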